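/- The unique solution ((y,p),(λ,μ)) ∈ U × X of the first-order mixed formulation is the unique saddle point of the Lagrangian 𝓛((y,p),(λ,μ)) := ½a((y,p),(y,p)) + b((y,p),(λ,μ)) − l(y,p), and it satisfies ‖(y,p)‖_U ≤ ‖ρ₀⁻¹y_obs‖_{L²(q_T)} and ‖(λ,μ)‖_X ≤ 2√(max{C_{Ω,T}ρ⋆⁻²‖ρ₁‖²_{L^∞(Q_T)} + η₁, C_{Ω,T}ρ⋆⁻²‖ρ‖²_{L^∞(Q_T)} + η₂}) ‖ρ₀⁻¹y_obs‖_{L²(q_T)}, where C_{Ω,T} is the energy-estimate constant for the first-order parabolic system. -/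
import Mathlib


open scoped RealInnerProductSpace

private lemma quad_coeff_zero (a b : ℝ) (ha : 0 ≤ a)
    (h : ∀ t : ℝ, 0 ≤ a * t ^ 2 + b * t) : b = 0 := by
  by_contra hb
  have hc : (0:ℝ) < a + 1 := by linarith
  have h1 := h (-(b / (a + 1)))
  have key : a * (-(b / (a + 1))) ^ 2 + b * (-(b / (a + 1)))
      = -(b ^ 2 / (a + 1) ^ 2) := by
    field_simp
    ring
  rw [key] at h1
  have h2 : 0 < b ^ 2 / (a + 1) ^ 2 := by positivity
  linarith

variable {U HQ VQ Hq : Type*}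
  [NormedAddCommGroup U] [InnerProductSpace ℝ U] [CompleteSpace U]
  [NormedAddCommGroup HQ] [InnerProductSpace ℝ HQ] [CompleteSpace HQ]
  [NormedAddCommGroup VQ] [InnerProductSpace ℝ VQ] [CompleteSpace VQ]
  [NormedAddCommGroup Hq] [InnerProductSpace ℝ Hq] [CompleteSpace Hq]

/-- The Lagrangian `𝓛((y,p),(λ,μ)) = ½ a((y,p),(y,p)) + b((y,p),(λ,μ)) − l(y,p)`. -/
noncomputable def Lagr1 (obsU : U →L[ℝ] Hq) (Jm : U →L[ℝ] VQ) (Im : U →L[ℝ] HQ)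
    (g : Hq) (u : U) (lm : HQ × VQ) : ℝ :=
  (1 / 2) * ⟪obsU u, obsU u⟫ + (⟪Jm u, lm.2⟫ + ⟪Im u, lm.1⟫) - ⟪obsU u, g⟫

private lemma Lagr1_expand (obsU : U →L[ℝ] Hq) (Jm : U →L[ℝ] VQ) (Im : U →L[ℝ] HQ)
    (g : Hq) (v w : U) (lm : HQ × VQ) :
    Lagr1 obsU Jm Im g (v + w) lm = Lagr1 obsU Jm Im g v lm
      + (⟪obsU v, obsU w⟫ + (⟪Jm w, lm.2⟫ + ⟪Im w, lm.1⟫) - ⟪obsU w, g⟫)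
      + (1 / 2) * ⟪obsU w, obsU w⟫ := by
  simp only [Lagr1, map_add, inner_add_left, inner_add_right]
  rw [real_inner_comm (obsU w) (obsU v)]
  ring

theorem firstOrder_solution_saddle_point_and_estimates
    (obsU : U →L[ℝ] Hq) (Jm : U →L[ℝ] VQ) (Im : U →L[ℝ] HQ)
    (η₁ η₂ : ℝ) (hη₁ : 0 < η₁) (hη₂ : 0 < η₂)
    (ρstar Mρ Mρ₁ CΩT : ℝ)
    (hρstar : 0 < ρstar) (hMρ : 0 < Mρ) (hMρ₁ : 0 < Mρ₁) (hCΩT : 0 < CΩT)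
    (hnormU : ∀ u : U,
      ‖u‖ ^ 2 = ‖obsU u‖ ^ 2 + η₁ * ‖Jm u‖ ^ 2 + η₂ * ‖Im u‖ ^ 2)
    (hsolveU : ∀ (lam : HQ) (mu : VQ), ∃ u : U, Im u = lam ∧ Jm u = mu ∧
      ‖obsU u‖ ^ 2 ≤
        CΩT * ρstar⁻¹ ^ 2 * (Mρ ^ 2 * ‖lam‖ ^ 2 + Mρ₁ ^ 2 * ‖mu‖ ^ 2))
    (g : Hq) (u : U) (lam : HQ) (mu : VQ)
    -- ((y,p),(λ,μ)) solves the first-order mixed formulation (3.5)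
    (hsol : (∀ ub : U,
        ⟪obsU u, obsU ub⟫ + (⟪Jm ub, mu⟫ + ⟪Im ub, lam⟫) = ⟪obsU ub, g⟫) ∧
      (∀ (lamb : HQ) (mub : VQ), ⟪Jm u, mub⟫ + ⟪Im u, lamb⟫ = 0)) :
    -- (ii) it is the unique saddle point of the Lagrangian 𝓛
    ((∀ lm : HQ × VQ,
        Lagr1 obsU Jm Im g u lm ≤ Lagr1 obsU Jm Im g u (lam, mu)) ∧
      (∀ v : U,
        Lagr1 obsU Jm Im g u (lam, mu) ≤ Lagr1 obsU Jm Im g v (lam, mu))) ∧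
    (∀ (v : U) (lm : HQ × VQ),
      ((∀ lm' : HQ × VQ, Lagr1 obsU Jm Im g v lm' ≤ Lagr1 obsU Jm Im g v lm) ∧
        (∀ v' : U, Lagr1 obsU Jm Im g v lm ≤ Lagr1 obsU Jm Im g v' lm)) →
      v = u ∧ lm = (lam, mu)) ∧
    -- (iii) the estimates (3.6)
    ‖u‖ ≤ ‖g‖ ∧
    Real.sqrt (‖lam‖ ^ 2 + ‖mu‖ ^ 2) ≤
      2 * Real.sqrt (max (CΩT * ρstar⁻¹ ^ 2 * Mρ₁ ^ 2 + η₁)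
        (CΩT * ρstar⁻¹ ^ 2 * Mρ ^ 2 + η₂)) * ‖g‖ := by
  obtain ⟨h1, h2⟩ := hsol
  -- Step 0: `Jm u = 0` and `Im u = 0`.
  have hb0 := h2 (Im u) (Jm u)
  have hJu : Jm u = 0 := by
    have n1 := real_inner_self_nonneg (x := Jm u)
    have n2 := real_inner_self_nonneg (x := Im u)
    have : ⟪Jm u, Jm u⟫ = 0 := by linarith
    exact inner_self_eq_zero.mp this
  have hIu : Im u = 0 := by
    have n1 := real_inner_self_nonneg (x := Jm u)
    have n2 := real_inner_self_nonneg (x := Im u)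
    have : ⟪Im u, Im u⟫ = 0 := by linarith
    exact inner_self_eq_zero.mp this
  -- `‖obsU u‖ ≤ ‖g‖`
  have hobsg : ⟪obsU u, obsU u⟫ = ⟪obsU u, g⟫ := by
    have := h1 u; rw [hJu, hIu] at this; simpa using this
  have hle : ‖obsU u‖ ≤ ‖g‖ := by
    have hcs := real_inner_le_norm (obsU u) g
    have hn : ⟪obsU u, obsU u⟫ = ‖obsU u‖ ^ 2 := real_inner_self_eq_norm_sq _
    nlinarith [norm_nonneg (obsU u), norm_nonneg g]
  refine ⟨⟨?_, ?_⟩, ?_, ?_, ?_⟩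
  · -- sup over multipliers
    intro lm
    simp only [Lagr1]
    rw [h2 lm.1 lm.2]
    rw [show ⟪Jm u, (lam, mu).2⟫ + ⟪Im u, (lam, mu).1⟫ = 0 from h2 lam mu]
  · -- min over primal variable
    intro v
    have hexp := Lagr1_expand obsU Jm Im g u (v - u) (lam, mu)
    rw [show u + (v - u) = v by abel] at hexp
    have hb := h1 (v - u)
    have hnn := real_inner_self_nonneg (x := obsU (v - u))
    have hbr : ⟪Jm (v - u), (lam, mu).2⟫ + ⟪Im (v - u), (lam, mu).1⟫
        = ⟪Jm (v - u), mu⟫ + ⟪Im (v - u), lam⟫ := rfl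
    rw [hbr] at hexp
    linarith [hexp, hb, hnn]
  · -- uniqueness of the saddle point
    rintro v lm ⟨hsup, hmin⟩
    -- from sup condition: Jm v = 0, Im v = 0
    have hsup' := hsup (lm.1 + Im v, lm.2 + Jm v)
    simp only [Lagr1, inner_add_right] at hsup'
    have nJ := real_inner_self_nonneg (x := Jm v)
    have nI := real_inner_self_nonneg (x := Im v)
    have hJv : Jm v = 0 := by
      have : ⟪Jm v, Jm v⟫ = 0 := by linarith
      exact inner_self_eq_zero.mp this
    have hIv : Im v = 0 := by
      have : ⟪Im v, Im v⟫ = 0 := by linarith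
      exact inner_self_eq_zero.mp this
    -- from min condition: Euler–Lagrange equation
    have hD : ∀ w : U,
        ⟪obsU v, obsU w⟫ + (⟪Jm w, lm.2⟫ + ⟪Im w, lm.1⟫) - ⟪obsU w, g⟫ = 0 := by
      intro w
      refine quad_coeff_zero ((1:ℝ)/2 * ⟪obsU w, obsU w⟫) _
        (by linarith [real_inner_self_nonneg (x := obsU w)]) ?_
      intro t
      have hm := hmin (v + t • w)
      rw [Lagr1_expand obsU Jm Im g v (t • w) lm] at hm
      simp only [map_smul, real_inner_smul_left, real_inner_smul_right] at hm
      nlinarith [hm]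
    have hDu : ∀ w : U,
        ⟪obsU u, obsU w⟫ + (⟪Jm w, mu⟫ + ⟪Im w, lam⟫) - ⟪obsU w, g⟫ = 0 :=
      fun w => sub_eq_zero_of_eq (h1 w)
    -- v = u
    have hvw := hD (v - u)
    have huw := hDu (v - u)
    have hJw : Jm (v - u) = 0 := by rw [map_sub, hJv, hJu, sub_zero]
    have hIw : Im (v - u) = 0 := by rw [map_sub, hIv, hIu, sub_zero]
    rw [hJw, hIw] at hvw huw
    simp only [inner_zero_left, add_zero] at hvw huw
    have hkey : ⟪obsU v - obsU u, obsU v - obsU u⟫ = 0 := by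
      rw [inner_sub_left]
      simp only [map_sub] at hvw huw
      linarith
    have hoz : obsU v - obsU u = 0 := inner_self_eq_zero.mp hkey
    have hvu : v = u := by
      have hoz' : obsU (v - u) = 0 := by rw [map_sub]; exact hoz
      have h0 : ‖v - u‖ ^ 2 = 0 := by
        rw [hnormU (v - u), hoz', hJw, hIw]; simp
      have : ‖v - u‖ = 0 := by
        have := pow_eq_zero_iff (n := 2) (by norm_num) |>.mp h0
        exact this
      exact sub_eq_zero.mp (norm_eq_zero.mp this)
    rw [hvu] at hD
    -- lm = (lam, mu)
    obtain ⟨w, hIw2, hJw2, -⟩ := hsolveU (lm.1 - lam) (lm.2 - mu)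
    have e1 := hD w
    have e2 := hDu w
    have d1 : ⟪Jm w, lm.2 - mu⟫ + ⟪Im w, lm.1 - lam⟫ = 0 := by
      rw [inner_sub_right, inner_sub_right]; linarith
    rw [hJw2, hIw2] at d1
    have nJ2 := real_inner_self_nonneg (x := lm.2 - mu)
    have nI2 := real_inner_self_nonneg (x := lm.1 - lam)
    have hmu2 : lm.2 = mu := by
      have : ⟪lm.2 - mu, lm.2 - mu⟫ = 0 := by linarith
      exact sub_eq_zero.mp (inner_self_eq_zero.mp this)
    have hlam2 : lm.1 = lam := by
      have : ⟪lm.1 - lam, lm.1 - lam⟫ = 0 := by linarith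
      exact sub_eq_zero.mp (inner_self_eq_zero.mp this)
    exact ⟨hvu, Prod.ext hlam2 hmu2⟩
  · -- ‖u‖ ≤ ‖g‖
    have h2' : ‖u‖ ^ 2 ≤ ‖g‖ ^ 2 := by
      rw [hnormU u, hJu, hIu]
      simp only [norm_zero]
      have := pow_le_pow_left₀ (norm_nonneg (obsU u)) hle 2
      nlinarith
    calc ‖u‖ = Real.sqrt (‖u‖ ^ 2) := (Real.sqrt_sq (norm_nonneg u)).symm
      _ ≤ Real.sqrt (‖g‖ ^ 2) := Real.sqrt_le_sqrt h2'
      _ = ‖g‖ := Real.sqrt_sq (norm_nonneg g)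
  · -- estimate on the multipliers
    obtain ⟨w, hIw, hJw, hest⟩ := hsolveU lam mu
    set M := max (CΩT * ρstar⁻¹ ^ 2 * Mρ₁ ^ 2 + η₁)
      (CΩT * ρstar⁻¹ ^ 2 * Mρ ^ 2 + η₂) with hM
    have hMpos : 0 < M := lt_of_lt_of_le (by positivity) (le_max_left _ _)
    set S := ‖lam‖ ^ 2 + ‖mu‖ ^ 2 with hS
    have hS0 : 0 ≤ S := by positivity
    have e := h1 w
    rw [hJw, hIw] at e
    have eS : S ≤ 2 * ‖g‖ * ‖obsU w‖ := by
      have c1 := real_inner_le_norm (obsU w) g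
      have c2 := abs_real_inner_le_norm (obsU u) (obsU w)
      have habs : -⟪obsU u, obsU w⟫ ≤ ‖obsU u‖ * ‖obsU w‖ := by
        have := neg_abs_le (⟪obsU u, obsU w⟫); linarith
      have nmu : ⟪mu, mu⟫ = ‖mu‖ ^ 2 := real_inner_self_eq_norm_sq _
      have nlam : ⟪lam, lam⟫ = ‖lam‖ ^ 2 := real_inner_self_eq_norm_sq _
      have step1 : S ≤ ‖obsU w‖ * ‖g‖ + ‖obsU u‖ * ‖obsU w‖ := by
        linarith [c1, habs, nmu, nlam, e]
      have step2 : ‖obsU u‖ * ‖obsU w‖ ≤ ‖g‖ * ‖obsU w‖ :=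
        mul_le_mul_of_nonneg_right hle (norm_nonneg _)
      linarith
    have hw2 : ‖obsU w‖ ^ 2 ≤ M * S := by
      have l1 : CΩT * ρstar⁻¹ ^ 2 * Mρ₁ ^ 2 + η₁ ≤ M := le_max_left _ _
      have l2 : CΩT * ρstar⁻¹ ^ 2 * Mρ ^ 2 + η₂ ≤ M := le_max_right _ _
      have a1 : CΩT * ρstar⁻¹ ^ 2 * Mρ ^ 2 * ‖lam‖ ^ 2 ≤ M * ‖lam‖ ^ 2 :=
        mul_le_mul_of_nonneg_right (by linarith) (sq_nonneg _)
      have a2 : CΩT * ρstar⁻¹ ^ 2 * Mρ₁ ^ 2 * ‖mu‖ ^ 2 ≤ M * ‖mu‖ ^ 2 :=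
        mul_le_mul_of_nonneg_right (by linarith) (sq_nonneg _)
      calc ‖obsU w‖ ^ 2
          ≤ CΩT * ρstar⁻¹ ^ 2 * (Mρ ^ 2 * ‖lam‖ ^ 2 + Mρ₁ ^ 2 * ‖mu‖ ^ 2) := hest
        _ ≤ M * ‖lam‖ ^ 2 + M * ‖mu‖ ^ 2 := by linarith [a1, a2]
        _ = M * S := by rw [hS]; ring
    have hobsw : ‖obsU w‖ ≤ Real.sqrt (M * S) := by
      rw [← Real.sqrt_sq (norm_nonneg (obsU w))]
      exact Real.sqrt_le_sqrt hw2
    have hfin : S ≤ 2 * ‖g‖ * (Real.sqrt M * Real.sqrt S) := by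
      rw [← Real.sqrt_mul hMpos.le]
      calc S ≤ 2 * ‖g‖ * ‖obsU w‖ := eS
        _ ≤ 2 * ‖g‖ * Real.sqrt (M * S) := by
            have hgnn : (0:ℝ) ≤ 2 * ‖g‖ := by positivity
            exact mul_le_mul_of_nonneg_left hobsw hgnn
    rcases eq_or_lt_of_le (Real.sqrt_nonneg S) with h0 | h0
    · rw [← h0]; positivity
    · have hSS : Real.sqrt S * Real.sqrt S = S := Real.mul_self_sqrt hS0
      have hstep : Real.sqrt S * Real.sqrt S
          ≤ (2 * Real.sqrt M * ‖g‖) * Real.sqrt S := by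
        rw [hSS]
        calc S ≤ 2 * ‖g‖ * (Real.sqrt M * Real.sqrt S) := hfin
          _ = (2 * Real.sqrt M * ‖g‖) * Real.sqrt S := by ring
      exact le_of_mul_le_mul_right hstep h0
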